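/- Let (S_j)_{j=0}^{N-1} be a representation of the Cuntz algebra 𝒪_N on H, and let (σ_i)_{i=0}^{N-1} be a complete and non-overlapping iterated function system on a compact metric space X. Let f ∈ H, let μ_f be a spectral measure of f, and for each j = 0, …, N−1 let ν_j be a spectral measure of S_j^* f. Then ∑_{j=0}^{N−1} ν_j ∘ σ_j^{−1} = μ_f, where ν_j ∘ σ_j^{−1} is the pushforward of ν_j under σ_j; equivalently, ∑_{j=0}^{N−1} ∫_X ψ(σ_j(x)) dν_j(x) = ∫_X ψ dμ_f for every bounded Borel function ψ : X → ℂ. -/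

import Mathlib

set_option linter.unusedSectionVars false
set_option maxHeartbeats 1000000


open MeasureTheory ContinuousLinearMap
open scoped InnerProductSpace

variable {H : Type*} [NormedAddCommGroup H] [InnerProductSpace ℂ H] [CompleteSpace H]
variable {X : Type*} [MetricSpace X] [CompactSpace X] [MeasurableSpace X] [BorelSpace X]

/-- The word operator `S_α = S_{α 1} ⋯ S_{α k}` associated to a multi-index
`α ∈ {0,…,N-1}^k`. -/
noncomputable def Sw {N : ℕ} (S : Fin N → H →L[ℂ] H) {k : ℕ} (α : Fin k → Fin N) :
    H →L[ℂ] H :=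
  (List.ofFn fun i => S (α i)).prod

/-- A family `S_0, …, S_{N-1}` of bounded operators is a representation of the Cuntz
algebra `𝒪_N` if `S_j^* S_k = δ_{jk} I` and `∑ j, S_j S_j^* = I`. -/
def CuntzRep {N : ℕ} (S : Fin N → H →L[ℂ] H) : Prop :=
  (∀ j k : Fin N, adjoint (S j) ∘L S k = if j = k then 1 else 0) ∧
    ∑ j : Fin N, S j ∘L adjoint (S j) = 1

/-- The composition `σ_{i_1} ∘ ⋯ ∘ σ_{i_k}` for a multi-index `i`. -/
def compIFS {N : ℕ} (σ : Fin N → X → X) {k : ℕ} (i : Fin k → Fin N) : X → X :=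
  (List.ofFn fun j => σ (i j)).foldr (· ∘ ·) id

/-- `A_k(i) = σ_{i_1} ∘ ⋯ ∘ σ_{i_k}(X)`. -/
def Ak {N : ℕ} (σ : Fin N → X → X) {k : ℕ} (i : Fin k → Fin N) : Set X :=
  Set.range (compIFS σ i)

/-- The IFS is complete if the diameters of `A_k(i_1,…,i_k)` tend to `0` along every
infinite word `(i_1, i_2, …)`. -/
def CompleteIFS {N : ℕ} (σ : Fin N → X → X) : Prop :=
  ∀ s : ℕ → Fin N,
    Filter.Tendsto (fun k : ℕ => Metric.diam (Ak σ fun j : Fin k => s j))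
      Filter.atTop (nhds 0)

/-- The IFS is non-overlapping if for each `k` the sets `A_k(i)` are pairwise disjoint. -/
def NonOverlapping {N : ℕ} (σ : Fin N → X → X) : Prop :=
  ∀ k : ℕ, ∀ i i' : Fin k → Fin N, i ≠ i' → Disjoint (Ak σ i) (Ak σ i')

/-- A Borel measure `μ` on `X` is a spectral measure of `g` if `μ(X) = ‖g‖²`
and `μ(A_k(i)) = ‖S_i^* g‖²` for every `k ≥ 1` and multi-index `i`. -/
def IsSpectralMeasureX {N : ℕ} (S : Fin N → H →L[ℂ] H) (σ : Fin N → X → X) (g : H)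
    (μ : Measure X) : Prop :=
  μ Set.univ = ENNReal.ofReal (‖g‖ ^ 2) ∧
    ∀ k : ℕ, 1 ≤ k → ∀ i : Fin k → Fin N,
      μ (Ak σ i) = ENNReal.ofReal (‖adjoint (Sw S i) g‖ ^ 2)

section helpers
variable {N : ℕ}

lemma Sw_nil (S : Fin N → H →L[ℂ] H) (α : Fin 0 → Fin N) : Sw S α = 1 := by
  simp [Sw]

lemma Sw_cons (S : Fin N → H →L[ℂ] H) {k : ℕ} (j : Fin N) (α : Fin k → Fin N) :
    Sw S (Fin.cons j α) = S j ∘L Sw S α := by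
  unfold Sw
  rw [List.ofFn_succ]
  simp only [Fin.cons_zero, Fin.cons_succ, List.prod_cons]
  rfl

lemma compIFS_nil (σ : Fin N → X → X) (i : Fin 0 → Fin N) : compIFS σ i = _root_.id := by
  simp [compIFS]

lemma compIFS_cons (σ : Fin N → X → X) {k : ℕ} (j : Fin N) (i : Fin k → Fin N) :
    compIFS σ (Fin.cons j i) = σ j ∘ compIFS σ i := by
  unfold compIFS
  rw [List.ofFn_succ]
  simp only [Fin.cons_zero, Fin.cons_succ, List.foldr_cons]

lemma foldr_comp_concat (l : List (X → X)) (g : X → X) :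
    (l.concat g).foldr (· ∘ ·) id = (l.foldr (· ∘ ·) id) ∘ g := by
  induction l with
  | nil => rfl
  | cons a l ih => simp only [List.concat_cons, List.foldr_cons, ih]; rfl

lemma compIFS_snoc (σ : Fin N → X → X) {k : ℕ} (i : Fin k → Fin N) (a : Fin N) :
    compIFS σ (Fin.snoc i a) = compIFS σ i ∘ σ a := by
  unfold compIFS
  rw [List.ofFn_succ']
  have h1 : (fun t : Fin k => σ (Fin.snoc (α := fun _ => Fin N) i a t.castSucc)) = fun t => σ (i t) := by
    funext t; rw [Fin.snoc_castSucc]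
  have h2 : Fin.snoc (α := fun _ => Fin N) i a (Fin.last k) = a := Fin.snoc_last _ _
  rw [h2, foldr_comp_concat, h1]

lemma continuous_compIFS (σ : Fin N → X → X) (hcont : ∀ i, Continuous (σ i))
    {k : ℕ} (i : Fin k → Fin N) : Continuous (compIFS σ i) := by
  induction k with
  | zero => rw [compIFS_nil]; exact continuous_id
  | succ k ih =>
      rw [← Fin.cons_self_tail i, compIFS_cons]
      exact (hcont _).comp (ih _)

lemma isCompact_Ak (σ : Fin N → X → X) (hcont : ∀ i, Continuous (σ i))
    {k : ℕ} (i : Fin k → Fin N) : IsCompact (Ak σ i) :=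
  isCompact_range (continuous_compIFS σ hcont i)

lemma measurableSet_Ak (σ : Fin N → X → X) (hcont : ∀ i, Continuous (σ i))
    {k : ℕ} (i : Fin k → Fin N) : MeasurableSet (Ak σ i) :=
  (isCompact_Ak σ hcont i).isClosed.measurableSet

lemma Ak_nil (σ : Fin N → X → X) (i : Fin 0 → Fin N) : Ak σ i = Set.univ := by
  simp [Ak, compIFS_nil]

lemma Ak_init_subset (σ : Fin N → X → X) {k : ℕ} (i : Fin (k + 1) → Fin N) :
    Ak σ i ⊆ Ak σ (Fin.init i) := by
  conv_lhs => rw [← Fin.snoc_init_self i]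
  rw [Ak, compIFS_snoc]
  exact Set.range_comp_subset_range _ _

lemma Ak_cons (σ : Fin N → X → X) {k : ℕ} (j : Fin N) (i : Fin k → Fin N) :
    Ak σ (Fin.cons j i) = σ j '' Ak σ i := by
  rw [Ak, Ak, compIFS_cons, Set.range_comp]

lemma Ak_prefix (σ : Fin N → X → X) {k n : ℕ} (h : k ≤ n) (i : Fin n → Fin N) :
    Ak σ i ⊆ Ak σ (fun j : Fin k => i (Fin.castLE h j)) := by
  induction n with
  | zero =>
      obtain rfl : k = 0 := Nat.le_zero.mp h
      have : (fun j : Fin 0 => i (Fin.castLE h j)) = i := funext fun j => j.elim0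
      rw [this]
  | succ n ih =>
      rcases Nat.eq_or_lt_of_le h with rfl | hlt
      · have : (fun j : Fin (n+1) => i (Fin.castLE h j)) = i := by
          funext j; congr 1
        rw [this]
      · have hk : k ≤ n := Nat.lt_succ_iff.mp hlt
        have heq : (fun j : Fin k => (Fin.init i) (Fin.castLE hk j))
            = fun j : Fin k => i (Fin.castLE h j) := by
          funext j; unfold Fin.init; congr 1
        rw [← heq]
        exact (Ak_init_subset σ i).trans (ih hk (Fin.init i))

end helpers

lemma cuntz_sum {N : ℕ} (S : Fin N → H →L[ℂ] H) (hS : CuntzRep S) (g : H) :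
    ∑ j : Fin N, ‖adjoint (S j) g‖ ^ 2 = ‖g‖ ^ 2 := by
  have h := congrArg (fun T : H →L[ℂ] H => ⟪T g, g⟫_ℂ) hS.2
  simp only [ContinuousLinearMap.sum_apply, ContinuousLinearMap.one_apply,
    sum_inner, ContinuousLinearMap.comp_apply] at h
  have h2 : ∀ j : Fin N, ⟪S j (adjoint (S j) g), g⟫_ℂ
      = ((‖adjoint (S j) g‖ : ℂ)) ^ 2 := by
    intro j
    rw [← adjoint_inner_right, inner_self_eq_norm_sq_to_K]
    norm_num
  rw [Finset.sum_congr rfl (fun j _ => h2 j), inner_self_eq_norm_sq_to_K] at h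
  have h3 : ((∑ j : Fin N, ‖adjoint (S j) g‖ ^ 2 : ℝ) : ℂ) = ((‖g‖ ^ 2 : ℝ) : ℂ) := by
    push_cast
    exact h
  exact_mod_cast h3

lemma sum_words {N : ℕ} (S : Fin N → H →L[ℂ] H) (hS : CuntzRep S) :
    ∀ (k : ℕ) (g : H), ∑ i : Fin k → Fin N, ‖adjoint (Sw S i) g‖ ^ 2 = ‖g‖ ^ 2 := by
  intro k
  induction k with
  | zero =>
      intro g
      have h1 : ∀ i : Fin 0 → Fin N, ‖adjoint (Sw S i) g‖ ^ 2 = ‖g‖ ^ 2 := by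
        intro i
        rw [Sw_nil, ContinuousLinearMap.one_def, ContinuousLinearMap.adjoint_id]
        norm_num
      rw [Finset.sum_congr rfl (fun i _ => h1 i), Finset.sum_const]
      simp
  | succ k ih =>
      intro g
      rw [← Equiv.sum_comp (Fin.consEquiv fun _ => Fin N)
        (fun i => ‖adjoint (Sw S i) g‖ ^ 2), Fintype.sum_prod_type]
      have h1 : ∀ (j : Fin N) (i : Fin k → Fin N),
          ‖adjoint (Sw S ((Fin.consEquiv fun _ => Fin N) (j, i))) g‖ ^ 2
            = ‖adjoint (Sw S i) (adjoint (S j) g)‖ ^ 2 := by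
        intro j i
        have : (Fin.consEquiv fun _ : Fin (k+1) => Fin N) (j, i) = Fin.cons j i := rfl
        rw [this, Sw_cons, adjoint_comp, ContinuousLinearMap.comp_apply]
      calc ∑ j : Fin N, ∑ i : Fin k → Fin N,
            ‖adjoint (Sw S ((Fin.consEquiv fun _ => Fin N) (j, i))) g‖ ^ 2
          = ∑ j : Fin N, ∑ i : Fin k → Fin N,
            ‖adjoint (Sw S i) (adjoint (S j) g)‖ ^ 2 :=
            Finset.sum_congr rfl fun j _ => Finset.sum_congr rfl fun i _ => h1 j i
        _ = ∑ j : Fin N, ‖adjoint (S j) g‖ ^ 2 :=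
            Finset.sum_congr rfl fun j _ => ih (adjoint (S j) g)
        _ = ‖g‖ ^ 2 := cuntz_sum S hS g

lemma ennreal_sum_squeeze {ι : Type*} [Fintype ι] (a b : ι → ENNReal)
    (hab : ∀ i, a i ≤ b i) (hba : ∑ i, b i ≤ ∑ i, a i) (hfin : ∀ i, b i ≠ ⊤) :
    ∀ i, b i = a i := by
  have hfa : ∀ i, a i ≠ ⊤ := fun i => ne_top_of_le_ne_top (hfin i) (hab i)
  have hsum : ∑ i, a i = ∑ i, b i :=
    le_antisymm (Finset.sum_le_sum fun i _ => hab i) hba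
  have hsumR : ∑ i, (a i).toReal = ∑ i, (b i).toReal := by
    rw [← ENNReal.toReal_sum (fun i _ => hfa i), ← ENNReal.toReal_sum (fun i _ => hfin i), hsum]
  have habR : ∀ i ∈ Finset.univ, (a i).toReal ≤ (b i).toReal :=
    fun i _ => ENNReal.toReal_le_toReal (hfa i) (hfin i) |>.mpr (hab i)
  have := (Finset.sum_eq_sum_iff_of_le habR).mp hsumR
  intro i
  exact ((ENNReal.toReal_eq_toReal_iff' (hfin i) (hfa i)).mp (this i (Finset.mem_univ i)).symm)


/-- If `μ_f` is a spectral measure of `f` and `ν_j` is a spectral measure of `S_j^* f`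
for each `j`, then `∑_j ν_j ∘ σ_j⁻¹ = μ_f`. -/
theorem stmt_3 {N : ℕ} (hN : 2 ≤ N) (S : Fin N → H →L[ℂ] H) (hS : CuntzRep S)
    (σ : Fin N → X → X) (hcont : ∀ i, Continuous (σ i))
    (hcomp : CompleteIFS σ) (hno : NonOverlapping σ)
    (f : H) (μf : Measure X) (hμf : IsSpectralMeasureX S σ f μf)
    (ν : Fin N → Measure X)
    (hν : ∀ j : Fin N, IsSpectralMeasureX S σ (adjoint (S j) f) (ν j)) :
    ∑ j : Fin N, Measure.map (σ j) (ν j) = μf := by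
  classical
  set μ : Measure X := ∑ j : Fin N, Measure.map (σ j) (ν j) with hμdef
  have hmeasA : ∀ {k : ℕ} (i : Fin k → Fin N), MeasurableSet (Ak σ i) :=
    fun i => measurableSet_Ak σ hcont i
  -- value of μf on the sets A_k(i), for every k (including k = 0)
  have hμfA : ∀ {k : ℕ} (i : Fin k → Fin N),
      μf (Ak σ i) = ENNReal.ofReal (‖adjoint (Sw S i) f‖ ^ 2) := by
    intro k i
    cases k with
    | zero =>
        rw [Ak_nil, Sw_nil, ContinuousLinearMap.one_def, ContinuousLinearMap.adjoint_id]
        exact hμf.1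
    | succ m => exact hμf.2 (m+1) (Nat.succ_le_succ (Nat.zero_le m)) i
  -- value of ν j on the sets A_m(i')
  have hνA : ∀ (j : Fin N) {m : ℕ} (i' : Fin m → Fin N),
      ν j (Ak σ i') = ENNReal.ofReal (‖adjoint (Sw S (Fin.cons j i')) f‖ ^ 2) := by
    intro j m i'
    have hadj : adjoint (Sw S (Fin.cons j i')) f = adjoint (Sw S i') (adjoint (S j) f) := by
      rw [Sw_cons, adjoint_comp, ContinuousLinearMap.comp_apply]
    rw [hadj]
    cases m with
    | zero =>
        rw [Ak_nil, Sw_nil, ContinuousLinearMap.one_def, ContinuousLinearMap.adjoint_id]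
        exact (hν j).1
    | succ m => exact (hν j).2 (m+1) (Nat.succ_le_succ (Nat.zero_le m)) i'
  -- total masses agree
  have hμapply : ∀ (A : Set X), MeasurableSet A → μ A = ∑ j : Fin N, ν j (σ j ⁻¹' A) := by
    intro A hA
    rw [hμdef, Measure.finset_sum_apply]
    exact Finset.sum_congr rfl fun j _ => Measure.map_apply (hcont j).measurable hA
  have htot : μ Set.univ = μf Set.univ := by
    rw [hμapply Set.univ MeasurableSet.univ]
    simp only [Set.preimage_univ]
    rw [Finset.sum_congr rfl (fun j _ => (hν j).1), hμf.1,
      ← ENNReal.ofReal_sum_of_nonneg (fun i _ => sq_nonneg _), cuntz_sum S hS f]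
  have hfin_f : μf Set.univ ≠ ⊤ := by rw [hμf.1]; exact ENNReal.ofReal_ne_top
  have hfin_μ : μ Set.univ ≠ ⊤ := by rw [htot]; exact hfin_f
  -- μ and μf agree on every A_k(i)
  have hμA : ∀ {k : ℕ} (i : Fin k → Fin N), μ (Ak σ i) = μf (Ak σ i) := by
    intro k
    cases k with
    | zero => intro i; rw [Ak_nil]; exact htot
    | succ m =>
        -- first, the per-index lower bound
        have hlb : ∀ i : Fin (m+1) → Fin N, μf (Ak σ i) ≤ μ (Ak σ i) := by
          intro i
          rw [hμapply _ (hmeasA i)]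
          have hsub : Ak σ (Fin.tail i) ⊆ σ (i 0) ⁻¹' Ak σ i := by
            intro x hx
            have : σ (i 0) x ∈ Ak σ (Fin.cons (i 0) (Fin.tail i)) := by
              rw [Ak_cons]; exact Set.mem_image_of_mem _ hx
            rwa [Fin.cons_self_tail] at this
          calc μf (Ak σ i) = ν (i 0) (Ak σ (Fin.tail i)) := by
                rw [hνA (i 0) (Fin.tail i), Fin.cons_self_tail, hμfA i]
            _ ≤ ν (i 0) (σ (i 0) ⁻¹' Ak σ i) := measure_mono hsub
            _ ≤ ∑ j : Fin N, ν j (σ j ⁻¹' Ak σ i) :=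
                Finset.single_le_sum (f := fun j => ν j (σ j ⁻¹' Ak σ i))
                  (fun j _ => zero_le) (Finset.mem_univ (i 0))
        -- the total mass bound
        have hdisj : (↑(Finset.univ : Finset (Fin (m+1) → Fin N)) :
            Set (Fin (m+1) → Fin N)).PairwiseDisjoint (Ak σ) :=
          fun i _ i' _ hne => hno (m+1) i i' hne
        have hsum_le : ∑ i : Fin (m+1) → Fin N, μ (Ak σ i)
            ≤ ∑ i : Fin (m+1) → Fin N, μf (Ak σ i) := by
          have h1 : ∑ i : Fin (m+1) → Fin N, μ (Ak σ i)
              = μ (⋃ i ∈ (Finset.univ : Finset (Fin (m+1) → Fin N)), Ak σ i) :=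
            (measure_biUnion_finset hdisj fun i _ => hmeasA i).symm
          have h2 : ∑ i : Fin (m+1) → Fin N, μf (Ak σ i) = μf Set.univ := by
            rw [Finset.sum_congr rfl (fun (i : Fin (m+1) → Fin N) _ => hμfA i),
              ← ENNReal.ofReal_sum_of_nonneg (fun i _ => sq_nonneg _),
              sum_words S hS (m+1) f, hμf.1]
          rw [h1, h2, ← htot]
          exact measure_mono (Set.subset_univ _)
        have hfinb : ∀ i : Fin (m+1) → Fin N, μ (Ak σ i) ≠ ⊤ :=
          fun i => ne_top_of_le_ne_top hfin_μ (measure_mono (Set.subset_univ _))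
        exact fun i => ennreal_sum_squeeze (fun i => μf (Ak σ i)) (fun i => μ (Ak σ i))
          hlb hsum_le hfinb i
  -- the union of all A_k(i) has full measure for both μ and μf
  set Y : ℕ → Set X := fun n => ⋃ i : Fin n → Fin N, Ak σ i with hYdef
  have hYmeas : ∀ n, MeasurableSet (Y n) := fun n => MeasurableSet.iUnion fun i => hmeasA i
  have hYuniv : ∀ n, ∀ (ρ : Measure X), (∀ {k : ℕ} (i : Fin k → Fin N),
      ρ (Ak σ i) = ENNReal.ofReal (‖adjoint (Sw S i) f‖ ^ 2)) →
      ρ Set.univ = ENNReal.ofReal (‖f‖ ^ 2) → ρ ((Y n)ᶜ) = 0 := by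
    intro n ρ hA huniv
    have hdisj : (↑(Finset.univ : Finset (Fin n → Fin N)) :
        Set (Fin n → Fin N)).PairwiseDisjoint (Ak σ) :=
      fun i _ i' _ hne => hno n i i' hne
    have hY : ρ (Y n) = ρ Set.univ := by
      have h1 : (⋃ i ∈ (Finset.univ : Finset (Fin n → Fin N)), Ak σ i) = Y n := by
        simp [hYdef]
      rw [← h1, measure_biUnion_finset hdisj fun i _ => hmeasA i,
        Finset.sum_congr rfl (fun (i : Fin n → Fin N) _ => hA i),
        ← ENNReal.ofReal_sum_of_nonneg (fun i _ => sq_nonneg _), sum_words S hS n f, huniv]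
    rw [measure_compl (hYmeas n) (by rw [hY, huniv]; exact ENNReal.ofReal_ne_top), hY,
      tsub_self]
  have hμfnull : ∀ n, μf ((Y n)ᶜ) = 0 := fun n => hYuniv n μf (fun i => hμfA i) hμf.1
  have hμnull : ∀ n, μ ((Y n)ᶜ) = 0 :=
    fun n => hYuniv n μ (fun i => (hμA i).trans (hμfA i)) (htot.trans hμf.1)
  -- agreement on open sets
  have huniq : ∀ {k : ℕ} {i i' : Fin k → Fin N} {x : X},
      x ∈ Ak σ i → x ∈ Ak σ i' → i = i' := by
    intro k i i' x h1 h2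
    by_contra hne
    exact Set.disjoint_left.mp (hno k i i' hne) h1 h2
  have hopen : ∀ U : Set X, IsOpen U → μ U = μf U := by
    intro U hU
    set W : ℕ → Set X := fun n =>
      ⋃ i ∈ Finset.univ.filter (fun i : Fin n → Fin N => Ak σ i ⊆ U), Ak σ i with hWdef
    have hWU : ∀ n, W n ⊆ U := fun n =>
      Set.iUnion₂_subset fun i hi => (Finset.mem_filter.mp hi).2
    have hWval : ∀ n, μ (W n) = μf (W n) := by
      intro n
      have hd : (↑(Finset.univ.filter (fun i : Fin n → Fin N => Ak σ i ⊆ U)) :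
          Set (Fin n → Fin N)).PairwiseDisjoint (Ak σ) :=
        fun i _ i' _ hne => hno n i i' hne
      rw [hWdef]
      simp only []
      rw [measure_biUnion_finset hd fun i _ => hmeasA i,
        measure_biUnion_finset hd fun i _ => hmeasA i]
      exact Finset.sum_congr rfl fun i _ => hμA i
    have hWY : ∀ k n, k ≤ n → W k ∩ Y n ⊆ W n := by
      rintro k n hkn x ⟨hxW, hxY⟩
      obtain ⟨i, hi, hxA⟩ := Set.mem_iUnion₂.mp hxW
      obtain ⟨i', hxA'⟩ := Set.mem_iUnion.mp hxY
      have hpre : x ∈ Ak σ (fun j : Fin k => i' (Fin.castLE hkn j)) := Ak_prefix σ hkn i' hxA'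
      have heqi : (fun j : Fin k => i' (Fin.castLE hkn j)) = i := huniq hpre hxA
      have hsubU : Ak σ i' ⊆ U := by
        refine (Ak_prefix σ hkn i').trans ?_
        rw [heqi]
        exact (Finset.mem_filter.mp hi).2
      exact Set.mem_iUnion₂.mpr ⟨i', Finset.mem_filter.mpr ⟨Finset.mem_univ _, hsubU⟩, hxA'⟩
    have hsubUC : U ∩ (⋂ n, Y n) ⊆ ⋃ n, W n := by
      rintro x ⟨hxU, hxY⟩
      rw [Set.mem_iInter] at hxY
      choose w hw using fun n => Set.mem_iUnion.mp (hxY n)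
      set s : ℕ → Fin N := fun n => w (n+1) ⟨n, n.lt_succ_self⟩ with hs
      have hws : ∀ n, w n = fun j : Fin n => s j := by
        intro n
        induction n with
        | zero => funext j; exact j.elim0
        | succ n ih =>
            have hinit : Fin.init (w (n+1)) = w n :=
              huniq (Ak_init_subset σ _ (hw (n+1))) (hw n)
            funext j
            refine Fin.lastCases ?_ (fun j0 => ?_) j
            · rfl
            · have h1 := congrFun hinit j0
              rw [ih] at h1
              have h2 : Fin.init (w (n+1)) j0 = w (n+1) j0.castSucc := rfl
              rw [h2] at h1
              simpa using h1
      obtain ⟨ε, hε, hball⟩ := Metric.isOpen_iff.mp hU x hxU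
      obtain ⟨n, hn⟩ := ((hcomp s).eventually (gt_mem_nhds hε)).exists
      have hxA : x ∈ Ak σ (fun j : Fin n => s j) := by
        rw [← hws n]; exact hw n
      have hsubU : Ak σ (fun j : Fin n => s j) ⊆ U := by
        intro y hy
        exact hball (Metric.mem_ball.mpr (lt_of_le_of_lt
          (Metric.dist_le_diam_of_mem (isCompact_Ak σ hcont _).isBounded hy hxA) hn))
      exact Set.mem_iUnion.mpr ⟨n, Set.mem_iUnion₂.mpr
        ⟨_, Finset.mem_filter.mpr ⟨Finset.mem_univ _, hsubU⟩, hxA⟩⟩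
    have hlim : ∀ ρ : Measure X, (∀ n, ρ ((Y n)ᶜ) = 0) → ρ U = ⨆ n, ρ (W n) := by
      intro ρ hnull
      have h1 : ρ U = ρ (⋃ n, W n) := by
        apply le_antisymm
        · have hUsplit : U ⊆ (U ∩ ⋂ n, Y n) ∪ (⋂ n, Y n)ᶜ := by
            intro x hx
            by_cases hx2 : x ∈ ⋂ n, Y n
            · exact Or.inl ⟨hx, hx2⟩
            · exact Or.inr hx2
          have hcnull : ρ ((⋂ n, Y n)ᶜ) = 0 := by
            rw [Set.compl_iInter]
            exact measure_iUnion_null fun n => hnull n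
          calc ρ U ≤ ρ ((U ∩ ⋂ n, Y n) ∪ (⋂ n, Y n)ᶜ) := measure_mono hUsplit
            _ ≤ ρ (U ∩ ⋂ n, Y n) + ρ ((⋂ n, Y n)ᶜ) := measure_union_le _ _
            _ = ρ (U ∩ ⋂ n, Y n) := by rw [hcnull, add_zero]
            _ ≤ ρ (⋃ n, W n) := measure_mono hsubUC
        · exact measure_mono (Set.iUnion_subset hWU)
      rw [h1, ← Set.iUnion_accumulate,
        (Set.monotone_accumulate.directed_le).measure_iUnion]
      refine iSup_congr fun n => ?_
      apply le_antisymm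
      · have hacc : Set.accumulate W n ⊆ W n ∪ (Y n)ᶜ := by
          rintro x hx
          obtain ⟨k, hk, hxk⟩ := Set.mem_iUnion₂.mp hx
          by_cases hxy : x ∈ Y n
          · exact Or.inl (hWY k n hk ⟨hxk, hxy⟩)
          · exact Or.inr hxy
        calc ρ (Set.accumulate W n) ≤ ρ (W n ∪ (Y n)ᶜ) := measure_mono hacc
          _ ≤ ρ (W n) + ρ ((Y n)ᶜ) := measure_union_le _ _
          _ = ρ (W n) := by rw [hnull n, add_zero]
      · exact measure_mono Set.subset_accumulate
    rw [hlim μ hμnull, hlim μf hμfnull]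
    exact iSup_congr hWval
  -- conclude
  haveI : IsFiniteMeasure μ := ⟨by rw [htot, hμf.1]; exact ENNReal.ofReal_lt_top⟩
  exact ext_of_generate_finite {s : Set X | IsOpen s} BorelSpace.measurable_eq
    isPiSystem_isOpen (fun s hs => hopen s hs) htot
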